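/- Let d ≥ 1 and let u : ℝ^d → ℝ be a bounded function such that M := sup{ |u(x+h)+u(x−h)−2u(x)|/|h| : x ∈ ℝ^d, h ∈ ℝ^d, h ≠ 0 } is finite. Then there exists an absolute constant C > 0 such that for all x, y ∈ ℝ^d with x ≠ y one has |u(x)−u(y)| ≤ C (sup_{ℝ^d}|u| + M) |x−y| (1 + |log|x−y||). In other words, the Hölder–Zygmund space C¹_*(ℝ^d) embeds continuously into the space of log-Lipschitz functions. -/

import Mathlib

open scoped ENNReal

noncomputable section

abbrev Euc (d : ℕ) := EuclideanSpace ℝ (Fin d)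

lemma zyg_key {d : ℕ} (u : Euc d → ℝ) (B M : ℝ)
    (hB : ∀ x : Euc d, |u x| ≤ B)
    (hM : ∀ x h : Euc d, h ≠ 0 → |u (x + h) + u (x - h) - 2 * u x| ≤ M * ‖h‖) :
    ∀ n : ℕ, ∀ x h : Euc d, h ≠ 0 →
      |u (x + h) - u x| ≤ 2 * B / 2 ^ n + n * M * ‖h‖ / 2 := by
  intro n
  induction n with
  | zero =>
    intro x h _
    have h1 := hB (x + h)
    have h2 := hB x
    have := abs_sub (u (x + h)) (u x)
    simp only [pow_zero, Nat.cast_zero]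
    linarith
  | succ n ih =>
    intro x h hh
    have h2 : h + h ≠ 0 := by
      rw [← two_smul ℝ h]
      exact smul_ne_zero two_ne_zero hh
    have hnorm : ‖h + h‖ = 2 * ‖h‖ := by
      rw [← two_smul ℝ h, norm_smul]
      simp
    have ihh := ih x (h + h) h2
    have zyg := hM (x + h) h hh
    have e1 : x + h + h = x + (h + h) := by abel
    have e2 : x + h - h = x := by abel
    rw [e1, e2] at zyg
    rw [hnorm] at ihh
    have a1 := abs_le.mp ihh
    have a2 := abs_le.mp zyg
    have hp : (2:ℝ) ^ (n + 1) = 2 ^ n * 2 := pow_succ 2 n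
    rw [abs_le]
    have hid : (2:ℝ) * B / 2 ^ (n + 1) = (2 * B / 2 ^ n) / 2 := by
      rw [hp]; ring
    rw [hid]
    push_cast
    constructor <;> nlinarith [a1.1, a1.2, a2.1, a2.2]

/-- The Hölder–Zygmund space `C¹_*(ℝ^d)` embeds continuously into the space of
log-Lipschitz functions: there is an absolute constant `C > 0` such that, for every `d ≥ 1` and
every bounded `u : ℝ^d → ℝ` with finite Zygmund seminorm (witnessed by bounds `B` and `M`),
`|u(x) − u(y)| ≤ C (B + M) |x−y| (1 + |log |x−y||)` for all `x ≠ y`. -/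
theorem statement7 :
    ∃ C : ℝ, 0 < C ∧
      ∀ (d : ℕ), 1 ≤ d → ∀ (u : Euc d → ℝ) (B M : ℝ),
        (∀ x : Euc d, |u x| ≤ B) →
        (∀ x h : Euc d, h ≠ 0 → |u (x + h) + u (x - h) - 2 * u x| ≤ M * ‖h‖) →
        ∀ x y : Euc d, x ≠ y →
          |u x - u y| ≤ C * (B + M) * ‖x - y‖ * (1 + |Real.log ‖x - y‖|) := by
  refine ⟨2, by norm_num, ?_⟩
  intro d hd u B M hB hM x y hxy
  set t := ‖x - y‖ with ht
  set L := |Real.log t| with hL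
  have hB0 : 0 ≤ B := (abs_nonneg _).trans (hB x)
  have hM0 : 0 ≤ M := by
    have hFin : (⟨0, hd⟩ : Fin d) = ⟨0, hd⟩ := rfl
    set e : Euc d := EuclideanSpace.single (⟨0, hd⟩ : Fin d) (1:ℝ) with he
    have hne : ‖e‖ = 1 := by
      rw [he, EuclideanSpace.norm_single]; norm_num
    have he0 : e ≠ 0 := by
      intro h0
      rw [h0, norm_zero] at hne; norm_num at hne
    have := (abs_nonneg _).trans (hM 0 e he0)
    rwa [hne, mul_one] at this
  have ht0 : 0 < t := by
    rw [ht]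
    exact norm_pos_iff.mpr (sub_ne_zero.mpr hxy)
  have hL0 : 0 ≤ L := abs_nonneg _
  have hsub : y - x ≠ 0 := sub_ne_zero.mpr (Ne.symm hxy)
  have hval : |u x - u y| = |u (x + (y - x)) - u x| := by
    rw [add_sub_cancel, abs_sub_comm]
  have hnrev : ‖y - x‖ = t := by rw [ht, norm_sub_rev]
  rcases le_or_gt 1 t with ht1 | ht1
  · -- large distance
    have hb : |u x - u y| ≤ 2 * B := by
      have := abs_sub (u x) (u y)
      have := hB x; have := hB y; linarith
    have hone : (1:ℝ) ≤ t * (1 + L) := by nlinarith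
    calc |u x - u y| ≤ 2 * B := hb
      _ ≤ 2 * (B + M) * 1 := by linarith
      _ ≤ 2 * (B + M) * (t * (1 + L)) := by
          apply mul_le_mul_of_nonneg_left hone; linarith
      _ = 2 * (B + M) * t * (1 + L) := by ring
  · -- small distance
    set n : ℕ := ⌈Real.logb 2 t⁻¹⌉₊ with hn
    have hinv1 : 1 ≤ t⁻¹ := (one_le_inv₀ ht0).mpr (le_of_lt ht1)
    have hlogb0 : 0 ≤ Real.logb 2 t⁻¹ := Real.logb_nonneg (by norm_num) hinv1
    have hceil : Real.logb 2 t⁻¹ ≤ (n : ℝ) := Nat.le_ceil _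
    have h2n : t⁻¹ ≤ 2 ^ n := by
      have : (2:ℝ) ^ (Real.logb 2 t⁻¹) ≤ 2 ^ (n : ℝ) :=
        Real.rpow_le_rpow_left_iff (by norm_num) |>.mpr hceil
      rwa [Real.rpow_logb (by positivity) (by norm_num) (by positivity),
        Real.rpow_natCast] at this
    have hlogt : Real.log t < 0 := Real.log_neg ht0 ht1
    have hLeq : L = -Real.log t := by rw [hL, abs_of_neg hlogt]
    have hlog2 : (0.6931471803 : ℝ) < Real.log 2 := Real.log_two_gt_d9
    have hlogb_eq : Real.logb 2 t⁻¹ = L / Real.log 2 := by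
      rw [Real.logb, Real.log_inv, hLeq]
    have hlogb_le : Real.logb 2 t⁻¹ ≤ 2 * L := by
      rw [hlogb_eq, div_le_iff₀ (by linarith)]
      nlinarith
    have hnle : (n : ℝ) ≤ 2 * (1 + L) := by
      have := Nat.ceil_lt_add_one hlogb0
      have : (n : ℝ) < Real.logb 2 t⁻¹ + 1 := by rw [hn]; exact_mod_cast this
      linarith
    have hkey := zyg_key u B M hB hM n x (y - x) hsub
    rw [hnrev] at hkey
    rw [hval]
    have hpow : 2 * B / 2 ^ n ≤ 2 * B * t := by
      have hpn : (0:ℝ) < 2 ^ n := by positivity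
      rw [div_le_iff₀ hpn]
      have : 1 ≤ t * 2 ^ n := by
        have h1 := mul_le_mul_of_nonneg_left h2n ht0.le
        rwa [mul_inv_cancel₀ ht0.ne'] at h1
      nlinarith
    have hmid : (n : ℝ) * M * t / 2 ≤ M * t * (1 + L) := by
      have : (n : ℝ) * M * t ≤ 2 * (1 + L) * (M * t) := by
        have hmt : 0 ≤ M * t := mul_nonneg hM0 (le_of_lt ht0)
        calc (n : ℝ) * M * t = (n : ℝ) * (M * t) := by ring
          _ ≤ 2 * (1 + L) * (M * t) := mul_le_mul_of_nonneg_right hnle hmt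
      linarith
    calc |u (x + (y - x)) - u x| ≤ 2 * B / 2 ^ n + n * M * t / 2 := hkey
      _ ≤ 2 * B * t + M * t * (1 + L) := by linarith
      _ ≤ 2 * (B + M) * t * (1 + L) := by
          nlinarith [mul_nonneg (mul_nonneg hB0 ht0.le) hL0,
            mul_nonneg (mul_nonneg hM0 ht0.le) (by linarith : (0:ℝ) ≤ 1 + L)]
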